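/- Let τ ∈ (0,1) with τ ≠ 1/2, and define g : [0,∞) → ℝ by g(ε) = [(1−τ) exp(−ετ/2) − τ exp(−ε(1−τ)/2)] / (1−2τ). Then g(0) = 1, g is strictly decreasing on [0,∞), and consequently g(ε) < 1 for every ε > 0. -/

import Mathlib

open MeasureTheory ProbabilityTheory Real Filter
open scoped ENNReal Topology NNReal

noncomputable section

/-- Check (quantile-loss) function `ρ_τ(u) = u (τ − 1_{u<0})`. -/
def checkFun (τ u : ℝ) : ℝ := u * (τ - if u < 0 then 1 else 0)

/-- Asymmetric Laplace density with location `μ`, scale `1`, skewness `τ`. -/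
def ald (τ y μ : ℝ) : ℝ := τ * (1 - τ) * Real.exp (-(checkFun τ (y - μ)))

lemma aff_hasDerivAt (τ x : ℝ) :
    HasDerivAt (fun ε : ℝ =>
        ((1 - τ) * Real.exp (-(ε * τ / 2)) - τ * Real.exp (-(ε * (1 - τ) / 2))) / (1 - 2 * τ))
      ((τ * (1 - τ) / 2) * (Real.exp (-(x * (1 - τ) / 2)) - Real.exp (-(x * τ / 2)))
        / (1 - 2 * τ)) x := by
  have h1 : HasDerivAt (fun ε : ℝ => Real.exp (-(ε * τ / 2)))
      (Real.exp (-(x * τ / 2)) * (-(τ / 2))) x := by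
    have := ((hasDerivAt_id x).mul_const τ).div_const 2
    exact (this.neg.exp).congr_deriv (by simp only [id, Pi.neg_apply]; ring)
  have h2 : HasDerivAt (fun ε : ℝ => Real.exp (-(ε * (1 - τ) / 2)))
      (Real.exp (-(x * (1 - τ) / 2)) * (-((1 - τ) / 2))) x := by
    have := ((hasDerivAt_id x).mul_const (1 - τ)).div_const 2
    exact (this.neg.exp).congr_deriv (by simp only [id, Pi.neg_apply]; ring)
  have h := (((h1.const_mul (1 - τ)).sub (h2.const_mul τ)).div_const (1 - 2 * τ))
  exact h.congr_deriv (by ring)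

/-- The Hellinger affinity `g(ε) = [(1−τ)e^{−ετ/2} − τe^{−ε(1−τ)/2}]/(1−2τ)` between two
unit-scale asymmetric Laplace densities with skewness `τ ≠ 1/2` and locations `ε` apart
satisfies `g(0) = 1`, `g` is strictly decreasing on `[0,∞)`, and `g(ε) < 1` for `ε > 0`. -/
theorem hellinger_affinity_strictAnti (τ : ℝ) (hτ : τ ∈ Set.Ioo (0 : ℝ) 1)
    (hτ2 : τ ≠ 1 / 2) :
    (((1 - τ) * Real.exp (-(0 * τ / 2)) - τ * Real.exp (-(0 * (1 - τ) / 2))) / (1 - 2 * τ)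
        = 1) ∧
    StrictAntiOn
      (fun ε : ℝ =>
        ((1 - τ) * Real.exp (-(ε * τ / 2)) - τ * Real.exp (-(ε * (1 - τ) / 2))) / (1 - 2 * τ))
      (Set.Ici 0) ∧
    ∀ ε : ℝ, 0 < ε →
      ((1 - τ) * Real.exp (-(ε * τ / 2)) - τ * Real.exp (-(ε * (1 - τ) / 2))) / (1 - 2 * τ)
        < 1 := by
  obtain ⟨hτ0, hτ1⟩ := hτ
  have hden : (1 : ℝ) - 2 * τ ≠ 0 := by
    intro h; apply hτ2; linarith
  have hg0 : ((1 - τ) * Real.exp (-(0 * τ / 2)) - τ * Real.exp (-(0 * (1 - τ) / 2)))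
      / (1 - 2 * τ) = 1 := by
    simp only [zero_mul, zero_div, neg_zero, Real.exp_zero, mul_one]
    rw [div_eq_one_iff_eq hden]
    ring
  have hanti : StrictAntiOn
      (fun ε : ℝ =>
        ((1 - τ) * Real.exp (-(ε * τ / 2)) - τ * Real.exp (-(ε * (1 - τ) / 2))) / (1 - 2 * τ))
      (Set.Ici 0) := by
    apply strictAntiOn_of_deriv_neg (convex_Ici 0)
    · exact Continuous.continuousOn (by continuity)
    · intro x hx
      rw [interior_Ici] at hx
      rw [(aff_hasDerivAt τ x).deriv]
      have hc : (0:ℝ) < τ * (1 - τ) / 2 := by nlinarith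
      rcases lt_or_gt_of_ne hτ2 with h | h
      · apply div_neg_of_neg_of_pos
        · apply mul_neg_of_pos_of_neg hc
          have : -(x * (1 - τ) / 2) < -(x * τ / 2) := by nlinarith [hx.out]
          linarith [Real.exp_lt_exp.2 this]
        · linarith
      · apply div_neg_of_pos_of_neg
        · apply mul_pos hc
          have : -(x * τ / 2) < -(x * (1 - τ) / 2) := by nlinarith [hx.out]
          linarith [Real.exp_lt_exp.2 this]
        · linarith
  refine ⟨hg0, hanti, fun ε hε => ?_⟩
  have h := hanti (Set.self_mem_Ici) (le_of_lt hε) hε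
  exact lt_of_lt_of_eq h hg0
end
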